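/- Let T ≥ 3, let x_1, …, x_T ∈ ZMod L_x be distinct columns, y₀ ∈ ZMod L_y a row, and a : Fin T → {0,1} an input with ∑_j a_j even; set r = ((∑_j a_j)/2 mod 2). Then (∏_j W_{Γ_{x_j}}^{a_j/2}) (Φ + V_{Γ̃_{y₀}} Φ) = Φ + (−1)^r · V_{Γ̃_{y₀}} Φ, and this vector is an eigenvector of V_{Γ̃_{y₀}} with eigenvalue (−1)^r. -/

import Mathlib

open Finset

noncomputable section

/-- The Hilbert space of qubits at the elements of `ι`. -/
abbrev QubitSpace (ι : Type*) := (ι → ZMod 2) → ℂ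

/-- Indicator function of a finset, valued in `ZMod 2`. -/
def indicZ2 {ι : Type*} [DecidableEq ι] (S : Finset ι) : ι → ZMod 2 :=
  fun b => if b ∈ S then 1 else 0

/-- The Z-type operator `W_S`. -/
def Wop {ι : Type*} [DecidableEq ι] (S : Finset ι) :
    Module.End ℂ (QubitSpace ι) where
  toFun ψ := fun σ => (-1 : ℂ) ^ (∑ b ∈ S, σ b).val * ψ σ
  map_add' ψ φ := by funext σ; simp [mul_add]
  map_smul' c ψ := by funext σ; simp; ring

/-- The X-type operator `V_S`. -/
def Vop {ι : Type*} [DecidableEq ι] (S : Finset ι) :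
    Module.End ℂ (QubitSpace ι) where
  toFun ψ := fun σ => ψ (σ + indicZ2 S)
  map_add' _ _ := rfl
  map_smul' _ _ := rfl

/-- The inner product `⟨ψ, φ⟩ = ∑_σ conj (ψ σ) · φ σ`. -/
def qInner {ι : Type*} [Fintype ι] [DecidableEq ι] (ψ φ : QubitSpace ι) : ℂ :=
  ∑ σ, (starRingEnd ℂ) (ψ σ) * φ σ

/-- Square root of an involution: `W^{1/2} = (1/2)(1+W) + (i/2)(1−W)`. -/
def sqrtInv {E : Type*} [AddCommGroup E] [Module ℂ E] (W : Module.End ℂ E) :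
    Module.End ℂ E :=
  ((2 : ℂ)⁻¹) • (1 + W) + (Complex.I * (2 : ℂ)⁻¹) • (1 - W)

/-- `W^{a/2}` for `a ∈ {0,1}`: the identity if `a = 0`, `W^{1/2}` if `a = 1`. -/
def halfPow {E : Type*} [AddCommGroup E] [Module ℂ E] (W : Module.End ℂ E)
    (a : ℕ) : Module.End ℂ E :=
  if a = 0 then 1 else sqrtInv W

/-- The post-strategy state `ψ' = (∏_j W_{Γ_j}^{a_j/2}) ψ` (the factors are
commuting diagonal operators, so the order of the product is immaterial). -/
def postState {ι : Type*} [DecidableEq ι] {T : ℕ} (Γ : Fin T → Finset ι)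
    (a : Fin T → ℕ) (ψ : QubitSpace ι) : QubitSpace ι :=
  ((List.ofFn fun j => halfPow (Wop (Γ j)) (a j)).prod) ψ

/-- The X-basis vector `χ_y(σ) = 2^{−|ι|/2} (−1)^{∑_b σ(b)·y(b)}`. -/
def chi {ι : Type*} [Fintype ι] (y : ι → ZMod 2) : QubitSpace ι :=
  fun σ => (((Real.sqrt 2 ^ Fintype.card ι)⁻¹ : ℝ) : ℂ) *
    (-1 : ℂ) ^ (∑ b, (σ b).val * (y b).val)

/-- `r = ((∑_j a_j)/2) mod 2 ∈ ZMod 2`. -/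
def rOf {T : ℕ} (a : Fin T → ℕ) : ZMod 2 := (((∑ j, a j) / 2 : ℕ) : ZMod 2)

/-- The winning probability on input `a`:
`p(ψ, a) = ∑_{y : ∑_{b ∈ Γ̃} y b = r} |⟨χ_y, ψ'⟩|²`. -/
def winProb {ι : Type*} [Fintype ι] [DecidableEq ι] {T : ℕ}
    (Γ : Fin T → Finset ι) (Γt : Finset ι) (a : Fin T → ℕ)
    (ψ : QubitSpace ι) : ℝ :=
  ∑ y ∈ univ.filter (fun y : ι → ZMod 2 => ∑ b ∈ Γt, y b = rOf a),
    ‖qInner (chi y) (postState Γ a ψ)‖ ^ 2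

/-- The quantum winning probability: the average of `p(ψ, a)` over the
`2^{T−1}` valid inputs `a` (those with `∑_j a_j` even). -/
def quantumWinProb {ι : Type*} [Fintype ι] [DecidableEq ι] {T : ℕ}
    (Γ : Fin T → Finset ι) (Γt : Finset ι) (ψ : QubitSpace ι) : ℝ :=
  (∑ a ∈ univ.filter (fun a : Fin T → Fin 2 => Even (∑ j, (a j : ℕ))),
      winProb Γ Γt (fun j => (a j : ℕ)) ψ) / 2 ^ (T - 1)

/-- The computational basis vector `δ_σ`. -/
def deltaVec {ι : Type*} [DecidableEq (ι → ZMod 2)] (σ : ι → ZMod 2) :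
    QubitSpace ι :=
  fun τ => if τ = σ then 1 else 0

/-! ### The square lattice on the torus -/

variable (Lx Ly : ℕ)

/-- Vertices of the `L_x × L_y` square lattice on the torus. -/
abbrev Vertex := ZMod Lx × ZMod Ly

/-- Bonds of the lattice: `((x,y), 0)` is the horizontal bond from `(x,y)` to
`(x+1,y)`, and `((x,y), 1)` the vertical bond from `(x,y)` to `(x,y+1)`. -/
abbrev Bond := (ZMod Lx × ZMod Ly) × Fin 2

variable [NeZero Lx] [NeZero Ly]

/-- The vertical Wilson loop `Γ_x = {((x,y),1) : y}`. -/
def gammaV (x : ZMod Lx) : Finset (Bond Lx Ly) :=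
  univ.filter (fun b => b.1.1 = x ∧ b.2 = 1)

/-- The horizontal Wilson loop `Γ^h_y = {((x,y),0) : x}`. -/
def gammaH (y : ZMod Ly) : Finset (Bond Lx Ly) :=
  univ.filter (fun b => b.1.2 = y ∧ b.2 = 0)

/-- The horizontal dual loop `Γ̃_y = {((x,y),1) : x}`. -/
def dualH (y : ZMod Ly) : Finset (Bond Lx Ly) :=
  univ.filter (fun b => b.1.2 = y ∧ b.2 = 1)

/-- The vertical dual loop `Δ_x = {((x,y),0) : y}`. -/
def dualV (x : ZMod Lx) : Finset (Bond Lx Ly) :=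
  univ.filter (fun b => b.1.1 = x ∧ b.2 = 0)

/-- The plaquette `P(x,y) = {((x,y),0), ((x,y),1), ((x,y+1),0), ((x+1,y),1)}`. -/
def plaqSet (v : Vertex Lx Ly) : Finset (Bond Lx Ly) :=
  {(v, 0), (v, 1), ((v.1, v.2 + 1), 0), ((v.1 + 1, v.2), 1)}

/-- The star `S(x,y) = {((x,y),0), ((x,y),1), ((x−1,y),0), ((x,y−1),1)}`. -/
def starSet (v : Vertex Lx Ly) : Finset (Bond Lx Ly) :=
  {(v, 0), (v, 1), ((v.1 - 1, v.2), 0), ((v.1, v.2 - 1), 1)}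

/-- The plaquette operator `A_{(x,y)} = W_{P(x,y)}`. -/
def Aop (v : Vertex Lx Ly) : Module.End ℂ (QubitSpace (Bond Lx Ly)) :=
  Wop (plaqSet Lx Ly v)

/-- The star operator `B_{(x,y)} = V_{S(x,y)}`. -/
def Bop (v : Vertex Lx Ly) : Module.End ℂ (QubitSpace (Bond Lx Ly)) :=
  Vop (starSet Lx Ly v)

/-- The basis vector at the all-zeros configuration. -/
def delta0 : QubitSpace (Bond Lx Ly) := fun σ => if σ = 0 then 1 else 0

/-- The star projector `(1/2)(1 + B_v)`. -/
def starProj (v : Vertex Lx Ly) : Module.End ℂ (QubitSpace (Bond Lx Ly)) :=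
  ((2 : ℂ)⁻¹) • (1 + Bop Lx Ly v)

lemma vop_commute {ι : Type*} [DecidableEq ι] (S T : Finset ι) :
    Commute (Vop S) (Vop T) := by
  apply LinearMap.ext; intro ψ; funext σ
  simp only [Module.End.mul_apply]
  show ψ (σ + indicZ2 S + indicZ2 T) = ψ (σ + indicZ2 T + indicZ2 S)
  rw [add_right_comm]

lemma starProj_commute (v w : Vertex Lx Ly) :
    Commute (starProj Lx Ly v) (starProj Lx Ly w) := by
  have h : Commute (Bop Lx Ly v) (Bop Lx Ly w) := vop_commute _ _
  have h1 : Commute (1 + Bop Lx Ly v) (1 + Bop Lx Ly w) :=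
    (Commute.one_left _).add_left (((Commute.one_right _).add_right h))
  exact (h1.smul_left _).smul_right _

/-- The (unnormalized) zero-flux ground state
`Φ = (∏_v (1/2)(1 + B_v)) δ₀` (the star projectors commute, so the product
is well-defined). -/
def Phi : QubitSpace (Bond Lx Ly) :=
  (Finset.univ.noncommProd (fun v : Vertex Lx Ly => starProj Lx Ly v)
    (fun v _ w _ _ => starProj_commute Lx Ly v w)) (delta0 Lx Ly)

/-- The norm induced by the inner product. -/
def qNorm {ι : Type*} [Fintype ι] [DecidableEq ι] (ψ : QubitSpace ι) : ℝ :=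
  Real.sqrt (qInner ψ ψ).re

section AuxGeneral

variable {ι : Type*} [DecidableEq ι]

lemma wop_apply' (S : Finset ι) (ψ : QubitSpace ι) (σ : ι → ZMod 2) :
    Wop S ψ σ = (-1 : ℂ) ^ (∑ b ∈ S, σ b).val * ψ σ := rfl

lemma vop_apply' (S : Finset ι) (ψ : QubitSpace ι) (σ : ι → ZMod 2) :
    Vop S ψ σ = ψ (σ + indicZ2 S) := rfl

lemma neg_one_pow_val_add (u w : ZMod 2) :
    (-1 : ℂ) ^ (u + w).val = (-1) ^ u.val * (-1) ^ w.val := by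
  rw [ZMod.val_add, ← neg_one_pow_eq_pow_mod_two, pow_add]

lemma wop_mul_vop (Γ S : Finset ι) :
    (Wop Γ) * (Vop S) =
      ((-1 : ℂ) ^ (∑ b ∈ Γ, indicZ2 S b).val) • ((Vop S) * (Wop Γ)) := by
  apply LinearMap.ext; intro ψ; funext σ
  simp only [Module.End.mul_apply, LinearMap.smul_apply, Pi.smul_apply,
    smul_eq_mul]
  rw [wop_apply', vop_apply', vop_apply', wop_apply']
  have hsum : (∑ b ∈ Γ, (σ + indicZ2 S) b)
      = (∑ b ∈ Γ, σ b) + (∑ b ∈ Γ, indicZ2 S b) := by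
    simp [Finset.sum_add_distrib]
  rw [hsum, neg_one_pow_val_add]
  have h1 : ((-1 : ℂ)) ^ (∑ b ∈ Γ, indicZ2 S b).val *
      ((-1 : ℂ)) ^ (∑ b ∈ Γ, indicZ2 S b).val = 1 := by
    rw [← pow_add]
    exact Even.neg_one_pow ⟨_, rfl⟩
  linear_combination
    (-((-1 : ℂ) ^ (∑ b ∈ Γ, σ b).val * ψ (σ + indicZ2 S))) * h1

lemma vop_vop_self (S : Finset ι) (ψ : QubitSpace ι) : Vop S (Vop S ψ) = ψ := by
  funext σ
  show ψ (σ + indicZ2 S + indicZ2 S) = ψ σ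
  have h : indicZ2 S + indicZ2 S = 0 := by
    funext b
    show (indicZ2 S b) + (indicZ2 S b) = 0
    generalize indicZ2 S b = z; revert z; decide
  rw [add_assoc, h, add_zero]

lemma sqrtInv_of_fix {E : Type*} [AddCommGroup E] [Module ℂ E]
    (W : Module.End ℂ E) (v : E) (h : W v = v) : sqrtInv W v = v := by
  simp only [sqrtInv, LinearMap.add_apply, LinearMap.smul_apply,
    LinearMap.sub_apply, Module.End.one_apply, h]
  module

lemma sqrtInv_of_neg {E : Type*} [AddCommGroup E] [Module ℂ E]
    (W : Module.End ℂ E) (v : E) (h : W v = -v) :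
    sqrtInv W v = Complex.I • v := by
  simp only [sqrtInv, LinearMap.add_apply, LinearMap.smul_apply,
    LinearMap.sub_apply, Module.End.one_apply, h]
  module

lemma list_prod_eigen {E : Type*} [AddCommGroup E] [Module ℂ E] (w : E) :
    ∀ l : List (Module.End ℂ E × ℂ), (∀ p ∈ l, p.1 w = p.2 • w) →
      (l.map Prod.fst).prod w = (l.map Prod.snd).prod • w := by
  intro l
  induction l with
  | nil => intro _; simp [Module.End.one_apply]
  | cons p l ih =>
    intro h
    simp only [List.map_cons, List.prod_cons, Module.End.mul_apply]
    rw [ih (fun q hq => h q (List.mem_cons_of_mem _ hq)), map_smul,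
      h p (List.mem_cons_self (a := p) (l := l)), smul_smul, mul_comm]

end AuxGeneral

section AuxLattice

variable (Lx Ly : ℕ) [NeZero Lx] [NeZero Ly]

lemma sum_gammaV (x : ZMod Lx) (f : Bond Lx Ly → ZMod 2) :
    ∑ b ∈ gammaV Lx Ly x, f b = ∑ w : ZMod Ly, f ((x, w), 1) := by
  rw [gammaV, Finset.sum_filter, Fintype.sum_prod_type]
  rw [show ∀ (g : Bond Lx Ly → ZMod 2),
      (∑ v : Vertex Lx Ly, ∑ d : Fin 2,
        if v.1 = x ∧ d = 1 then g (v, d) else 0)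
      = ∑ v : Vertex Lx Ly, if v.1 = x then g (v, 1) else 0 from
    fun g => by
      refine Finset.sum_congr rfl fun v _ => ?_
      rw [Fin.sum_univ_two]
      by_cases hv : v.1 = x <;> simp [hv]]
  rw [Fintype.sum_prod_type, Finset.sum_comm]
  simp

lemma phase_star (hLy : 2 ≤ Ly) (x : ZMod Lx) (v : Vertex Lx Ly) :
    ∑ b ∈ gammaV Lx Ly x, indicZ2 (starSet Lx Ly v) b = 0 := by
  haveI : Fact (1 < Ly) := ⟨hLy⟩
  rw [sum_gammaV]
  have hmem : ∀ w : ZMod Ly, (((x, w), (1 : Fin 2)) ∈ starSet Lx Ly v)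
      ↔ (x = v.1 ∧ (w = v.2 ∨ w = v.2 - 1)) := by
    intro w
    simp [starSet, Prod.ext_iff]
    tauto
  by_cases hx : x = v.1
  · have hne : v.2 ≠ v.2 - 1 := fun h => one_ne_zero (sub_eq_self.mp h.symm)
    have key : ∀ w : ZMod Ly, indicZ2 (starSet Lx Ly v) ((x, w), (1 : Fin 2))
        = (if w = v.2 then 1 else 0) + (if w = v.2 - 1 then 1 else 0) := by
      intro w
      rw [indicZ2, if_congr (hmem w) rfl rfl]
      by_cases h1 : w = v.2
      · subst h1; simp [hx, hne]
      · by_cases h2 : w = v.2 - 1 <;> simp [hx, h1, h2]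
    rw [Finset.sum_congr rfl fun w _ => key w, Finset.sum_add_distrib,
      Finset.sum_ite_eq' Finset.univ v.2 (fun _ => (1 : ZMod 2)),
      Finset.sum_ite_eq' Finset.univ (v.2 - 1) (fun _ => (1 : ZMod 2))]
    simp only [Finset.mem_univ, if_true]
    decide
  · have key : ∀ w : ZMod Ly,
        indicZ2 (starSet Lx Ly v) ((x, w), (1 : Fin 2)) = 0 := by
      intro w
      rw [indicZ2, if_congr (hmem w) rfl rfl, if_neg (fun h => hx h.1)]
    rw [Finset.sum_congr rfl fun w _ => key w]
    simp

lemma phase_dual (x : ZMod Lx) (y₀ : ZMod Ly) :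
    ∑ b ∈ gammaV Lx Ly x, indicZ2 (dualH Lx Ly y₀) b = 1 := by
  rw [sum_gammaV]
  have : ∀ w : ZMod Ly, indicZ2 (dualH Lx Ly y₀) ((x, w), (1 : Fin 2))
      = if w = y₀ then 1 else 0 := by
    intro w
    rw [indicZ2]
    by_cases h : w = y₀ <;> simp [dualH, h]
  rw [Finset.sum_congr rfl fun w _ => this w]
  simp

lemma wop_delta0 (Γ : Finset (Bond Lx Ly)) :
    Wop Γ (delta0 Lx Ly) = delta0 Lx Ly := by
  funext σ
  rw [wop_apply', delta0]
  by_cases h : σ = 0 <;> simp [h]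

lemma wop_gammaV_commute_starProj (hLy : 2 ≤ Ly) (x : ZMod Lx)
    (v : Vertex Lx Ly) :
    Commute (Wop (gammaV Lx Ly x)) (starProj Lx Ly v) := by
  have hB : Commute (Wop (gammaV Lx Ly x)) (Bop Lx Ly v) := by
    have := wop_mul_vop (gammaV Lx Ly x) (starSet Lx Ly v)
    rw [phase_star Lx Ly hLy] at this
    simpa [Commute, SemiconjBy, Bop] using this
  exact (((Commute.one_right _).add_right hB).smul_right _)

lemma wop_phi (hLy : 2 ≤ Ly) (x : ZMod Lx) :
    Wop (gammaV Lx Ly x) (Phi Lx Ly) = Phi Lx Ly := by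
  have hc : Commute (Wop (gammaV Lx Ly x))
      (Finset.univ.noncommProd (fun v : Vertex Lx Ly => starProj Lx Ly v)
        (fun v _ w _ _ => starProj_commute Lx Ly v w)) :=
    Finset.noncommProd_commute _ _ _ _
      (fun v _ => wop_gammaV_commute_starProj Lx Ly hLy x v)
  calc Wop (gammaV Lx Ly x) (Phi Lx Ly)
      = ((Wop (gammaV Lx Ly x)) *
          (Finset.univ.noncommProd (fun v : Vertex Lx Ly => starProj Lx Ly v)
            (fun v _ w _ _ => starProj_commute Lx Ly v w))) (delta0 Lx Ly) :=
        rfl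
    _ = _ := by
        rw [hc.eq]
        show (Finset.univ.noncommProd (fun v : Vertex Lx Ly => starProj Lx Ly v)
          (fun v _ w _ _ => starProj_commute Lx Ly v w))
            (Wop (gammaV Lx Ly x) (delta0 Lx Ly)) = Phi Lx Ly
        rw [wop_delta0]
        rfl

lemma wop_vphi (hLy : 2 ≤ Ly) (x : ZMod Lx) (y₀ : ZMod Ly) :
    Wop (gammaV Lx Ly x) (Vop (dualH Lx Ly y₀) (Phi Lx Ly))
      = -(Vop (dualH Lx Ly y₀) (Phi Lx Ly)) := by
  have h := wop_mul_vop (gammaV Lx Ly x) (dualH Lx Ly y₀)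
  rw [phase_dual] at h
  have h2 := congrArg (fun A : Module.End ℂ (QubitSpace (Bond Lx Ly)) =>
    A (Phi Lx Ly)) h
  simp only [Module.End.mul_apply, LinearMap.smul_apply] at h2
  rw [h2, wop_phi Lx Ly hLy]
  norm_num [ZMod.val_one]

end AuxLattice

/-- for distinct columns `x_1, …, x_T`, a row `y₀`, and a valid
input `a` (each `a j ∈ {0,1}`, `∑_j a_j` even, `r = ((∑_j a_j)/2) mod 2`),
the team operations map the unnormalized cat state `Φ + V_{Γ̃_{y₀}} Φ` to
`Φ + (−1)^r V_{Γ̃_{y₀}} Φ`, which is an eigenvector of `V_{Γ̃_{y₀}}` with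
eigenvalue `(−1)^r`. -/
theorem postState_cat (Lx Ly : ℕ) [NeZero Lx] [NeZero Ly]
    (hLx : 2 ≤ Lx) (hLy : 2 ≤ Ly)
    (T : ℕ) (hT : 3 ≤ T) (x : Fin T → ZMod Lx) (hx : Function.Injective x)
    (y₀ : ZMod Ly) (a : Fin T → ℕ) (ha : ∀ j, a j ≤ 1)
    (hae : Even (∑ j, a j)) :
    postState (fun j => gammaV Lx Ly (x j)) a
        (Phi Lx Ly + Vop (dualH Lx Ly y₀) (Phi Lx Ly))
      = Phi Lx Ly +
          ((-1 : ℂ) ^ (rOf a).val) • Vop (dualH Lx Ly y₀) (Phi Lx Ly) ∧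
      Vop (dualH Lx Ly y₀)
          (Phi Lx Ly +
            ((-1 : ℂ) ^ (rOf a).val) • Vop (dualH Lx Ly y₀) (Phi Lx Ly))
        = ((-1 : ℂ) ^ (rOf a).val) •
            (Phi Lx Ly +
              ((-1 : ℂ) ^ (rOf a).val) • Vop (dualH Lx Ly y₀) (Phi Lx Ly)) := by
  set c : ℂ := (-1 : ℂ) ^ (rOf a).val with hc_def
  set Vψ : QubitSpace (Bond Lx Ly) := Vop (dualH Lx Ly y₀) (Phi Lx Ly) with hV
  -- eigenvalue relation for each half-power factor
  have hfixΦ : ∀ j : Fin T,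
      (halfPow (Wop (gammaV Lx Ly (x j))) (a j)) (Phi Lx Ly) = Phi Lx Ly := by
    intro j
    rcases Nat.le_one_iff_eq_zero_or_eq_one.mp (ha j) with h | h <;> rw [h]
    · simp [halfPow, Module.End.one_apply]
    · rw [halfPow, if_neg one_ne_zero]
      exact sqrtInv_of_fix _ _ (wop_phi Lx Ly hLy (x j))
  have heigV : ∀ j : Fin T,
      (halfPow (Wop (gammaV Lx Ly (x j))) (a j)) Vψ
        = (Complex.I ^ a j) • Vψ := by
    intro j
    rcases Nat.le_one_iff_eq_zero_or_eq_one.mp (ha j) with h | h <;> rw [h]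
    · simp [halfPow, Module.End.one_apply]
    · rw [halfPow, if_neg one_ne_zero, pow_one]
      exact sqrtInv_of_neg _ _ (wop_vphi Lx Ly hLy (x j) y₀)
  -- the product acting on Φ
  have hprodΦ : postState (fun j => gammaV Lx Ly (x j)) a (Phi Lx Ly)
      = Phi Lx Ly := by
    have := list_prod_eigen (Phi Lx Ly)
      (List.ofFn fun j : Fin T =>
        ((halfPow (Wop (gammaV Lx Ly (x j))) (a j)), (1 : ℂ)))
      (by
        intro p hp
        rw [List.mem_ofFn] at hp
        obtain ⟨j, rfl⟩ := hp
        simpa using hfixΦ j)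
    simpa [postState, List.map_ofFn, Function.comp, Function.comp_def, List.prod_ofFn] using this
  -- the product acting on Vψ
  have hprodV : postState (fun j => gammaV Lx Ly (x j)) a Vψ
      = (Complex.I ^ (∑ j, a j)) • Vψ := by
    have := list_prod_eigen Vψ
      (List.ofFn fun j : Fin T =>
        ((halfPow (Wop (gammaV Lx Ly (x j))) (a j)), (Complex.I ^ a j)))
      (by
        intro p hp
        rw [List.mem_ofFn] at hp
        obtain ⟨j, rfl⟩ := hp
        simpa using heigV j)
    simpa [postState, List.map_ofFn, Function.comp, Function.comp_def, List.prod_ofFn,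
      Finset.prod_pow_eq_pow_sum] using this
  -- identify the phase
  obtain ⟨m, hm⟩ := hae
  have hr : (rOf a).val = m % 2 := by
    rw [rOf, hm, show (m + m) / 2 = m by omega, ZMod.val_natCast]
  have hphase : Complex.I ^ (∑ j, a j) = c := by
    rw [hm, hc_def, hr, ← neg_one_pow_eq_pow_mod_two, pow_add, ← mul_pow,
      Complex.I_mul_I]
  have hcc : c * c = 1 := by
    rw [hc_def, ← pow_add]
    exact Even.neg_one_pow ⟨(rOf a).val, rfl⟩
  constructor
  · have hlin : postState (fun j => gammaV Lx Ly (x j)) a (Phi Lx Ly + Vψ)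
        = postState (fun j => gammaV Lx Ly (x j)) a (Phi Lx Ly)
          + postState (fun j => gammaV Lx Ly (x j)) a Vψ := by
      simp [postState, map_add]
    rw [hlin, hprodΦ, hprodV, hphase]
  · rw [map_add, map_smul, hV, vop_vop_self, smul_add, smul_smul, hcc,
      one_smul, add_comm]
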